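/- Let A be an n×m real matrix with n ≥ 2, let D = D(A) be its (n−1)×m payoff difference matrix, let D̄ = D̄(A) and b = (0,…,0,1)ᵀ ∈ ℝⁿ. Then there exists a vector x ∈ ℝᵐ with x ≥ 0 componentwise such that D̄x = b if and only if there does not exist a vector w ∈ ℝ^{n−1} such that every entry of wᵀD is strictly positive. -/

import Mathlib

/-- The payoff difference matrix `D(A)`: row `k` is row `k` of `A` minus row `k+1`. -/
def Dmat {n m : ℕ} (A : Matrix (Fin (n + 1)) (Fin m) ℝ) :
    Matrix (Fin n) (Fin m) ℝ :=
  fun k i => A k.castSucc i - A k.succ i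

/-- The matrix `D̄(A)`: equal to `D(A)` in its first `n-1` rows, with an all-ones last row. -/
def Dbar {n m : ℕ} (A : Matrix (Fin (n + 1)) (Fin m) ℝ) :
    Matrix (Fin (n + 1)) (Fin m) ℝ :=
  fun k => Fin.lastCases (fun _ => (1 : ℝ)) (fun k i => Dmat A k i) k

/-- The vector `b = (0, …, 0, 1)ᵀ`. -/
def bvec (n : ℕ) : Fin (n + 1) → ℝ := fun j => if j = Fin.last n then 1 else 0

/-- For an `n × m` payoff matrix `A` with `n ≥ 2` (here `n = n' + 2`), there exists
`x ≥ 0` with `D̄x = b` if and only if there is no `w ∈ ℝ^{n-1}` with every entry of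
`wᵀD` strictly positive. -/
theorem farkas_characterization {n' m : ℕ} (A : Matrix (Fin (n' + 2)) (Fin m) ℝ) :
    (∃ x : Fin m → ℝ, (∀ i, 0 ≤ x i) ∧ (Dbar A).mulVec x = bvec (n' + 1)) ↔
      ¬ ∃ w : Fin (n' + 1) → ℝ, ∀ i : Fin m, 0 < Matrix.vecMul w (Dmat A) i := by
  classical
  have hbar : ∀ x : Fin m → ℝ, (Dbar A).mulVec x = bvec (n' + 1) ↔
      ((Dmat A).mulVec x = 0 ∧ ∑ i, x i = 1) := by
    intro x
    constructor
    · intro h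
      refine ⟨funext fun k => ?_, ?_⟩
      · have hk := congrFun h k.castSucc
        simpa [Matrix.mulVec, dotProduct, Dbar, bvec,
          (Fin.castSucc_lt_last k).ne] using hk
      · have hk := congrFun h (Fin.last (n' + 1))
        simpa [Matrix.mulVec, dotProduct, Dbar, bvec] using hk
    · rintro ⟨h0, h1⟩
      funext k
      induction k using Fin.lastCases with
      | last => simpa [Matrix.mulVec, dotProduct, Dbar, bvec] using h1
      | cast k =>
        have hk := congrFun h0 k
        simpa [Matrix.mulVec, dotProduct, Dbar, bvec,
          (Fin.castSucc_lt_last k).ne] using hk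
  constructor
  · rintro ⟨x, hx, hxb⟩ ⟨w, hw⟩
    obtain ⟨h0, h1⟩ := (hbar x).1 hxb
    have hzero : dotProduct w ((Dmat A).mulVec x) = 0 := by rw [h0]; simp
    rw [Matrix.dotProduct_mulVec] at hzero
    have hex : ∃ i, 0 < x i := by
      by_contra hc
      push_neg at hc
      have hx0 : ∀ i, x i = 0 := fun i => le_antisymm (hc i) (hx i)
      simp [hx0] at h1
    obtain ⟨i, hi⟩ := hex
    have hpos : 0 < dotProduct (Matrix.vecMul w (Dmat A)) x := by
      refine Finset.sum_pos' (fun j _ => mul_nonneg (le_of_lt (hw j)) (hx j))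
        ⟨i, Finset.mem_univ i, mul_pos (hw i) hi⟩
    rw [hzero] at hpos
    exact lt_irrefl 0 hpos
  · intro hnw
    by_cases hm : m = 0
    · exact absurd ⟨0, fun i => absurd i.isLt (by omega)⟩ hnw
    by_contra hnx
    set f : (Fin m → ℝ) →ₗ[ℝ] (Fin (n' + 1) → ℝ) := (Dmat A).mulVecLin with hf
    set S : Set (Fin (n' + 1) → ℝ) := f '' stdSimplex ℝ (Fin m) with hS
    have h0S : (0 : Fin (n' + 1) → ℝ) ∉ S := by
      rintro ⟨x, hxS, hfx⟩
      exact hnx ⟨x, hxS.1, (hbar x).2 ⟨hfx, hxS.2⟩⟩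
    have hconv : Convex ℝ S := (convex_stdSimplex ℝ (Fin m)).linear_image f
    have hcomp : IsCompact S :=
      (isCompact_stdSimplex ℝ (Fin m)).image f.continuous_of_finiteDimensional
    obtain ⟨g, u, hgu, hgb⟩ :=
      geometric_hahn_banach_point_closed hconv hcomp.isClosed h0S
    have hu : 0 < u := by simpa using hgu
    refine hnw ⟨fun j => g (Pi.single j 1), fun i => ?_⟩
    have hsingle : (Pi.single i 1 : Fin m → ℝ) ∈ stdSimplex ℝ (Fin m) := by
      constructor
      · intro j
        by_cases h : j = i <;> simp [Pi.single_apply, h]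
      · simp
    have hci : f (Pi.single i 1) ∈ S := ⟨Pi.single i 1, hsingle, rfl⟩
    have hgc : u < g (f (Pi.single i 1)) := hgb _ hci
    have hval : f (Pi.single i 1) = fun k => Dmat A k i := by
      funext k
      simp [hf, Matrix.mulVecLin, Matrix.mulVec, dotProduct, Pi.single_apply]
    have hexp : g (f (Pi.single i 1)) = ∑ j, Dmat A j i * g (Pi.single j 1) := by
      rw [hval]
      have := pi_eq_sum_univ (fun k => Dmat A k i)
      conv_lhs => rw [this]
      rw [map_sum]
      refine Finset.sum_congr rfl fun j _ => ?_
      have hfun : (fun j1 => if j = j1 then (1 : ℝ) else 0) = Pi.single j 1 := by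
        funext j1
        simp [Pi.single_apply, eq_comm]
      rw [map_smul, hfun]
      simp [smul_eq_mul]
    have : Matrix.vecMul (fun j => g (Pi.single j 1)) (Dmat A) i
        = ∑ j, Dmat A j i * g (Pi.single j 1) := by
      simp [Matrix.vecMul, dotProduct, mul_comm]
    rw [this, ← hexp]
    exact lt_trans hu hgc
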